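/- Let Y be a connected graph with vertex set partitioned into subgraphs Y_i (i ∈ I) each isomorphic to a fixed graph with maximal degree M_Y, inside an ambient graph X of minimal degree m_X, and let q : Ỹ → Y be a 2-covering used to build the graph X̃ with inner, outer and vertical edges as in the pasting construction. Assume every edge of X belongs to strictly fewer than m_X − M_Y − 1 triangles. Then every isometry f of X̃ sends vertical edges to vertical edges, and consequently induces an isometry g of X such that the projection X̃ → X intertwines f and g. -/

import Mathlib

variable {VY VYt I : Type*}

/-- A covering map of simple graphs. -/
def IsGraphCovering (G : SimpleGraph VYt) (G' : SimpleGraph VY) (f : VYt → VY) : Prop :=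
  (∀ a b, G.Adj a b → G'.Adj (f a) (f b)) ∧
    ∀ v, Set.BijOn f (G.neighborSet v) (G'.neighborSet (f v))

/-- The pasted graph `X̃` obtained from a partition `X = ⊔_{i ∈ I} Y_i`
(encoded as `X` on the vertex set `I × VY`, each `{i} × VY` inducing `Y`) and
a 2-covering `q : Ỹ → Y`: its vertices are `Ỹ × I`, with inner edges (from
`Ỹ`), outer edges (from edges of `X` between distinct parts) and vertical
edges (between the two points of a fiber of `q`). -/
def pastedGraph (Yt : SimpleGraph VYt) (X : SimpleGraph (I × VY))
    (q : VYt → VY) : SimpleGraph (VYt × I) where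
  Adj a b :=
    (a.2 = b.2 ∧ (Yt.Adj a.1 b.1 ∨ (a.1 ≠ b.1 ∧ q a.1 = q b.1))) ∨
      (a.2 ≠ b.2 ∧ X.Adj (a.2, q a.1) (b.2, q b.1))
  symm := by
    constructor
    rintro a b (⟨h1, h2 | ⟨h2, h3⟩⟩ | ⟨h1, h2⟩)
    · exact Or.inl ⟨h1.symm, Or.inl h2.symm⟩
    · exact Or.inl ⟨h1.symm, Or.inr ⟨h2.symm, h3.symm⟩⟩
    · exact Or.inr ⟨h1.symm, h2.symm⟩
  loopless := by
    constructor
    rintro a (⟨-, h | ⟨h, -⟩⟩ | ⟨h, -⟩)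
    · exact Yt.loopless.irrefl _ h
    · exact h rfl
    · exact h rfl

/-- A vertical edge of the pasted graph: same index, distinct vertices in the
same fiber of `q`. -/
def VerticalAdj (q : VYt → VY) (a b : VYt × I) : Prop :=
  a.2 = b.2 ∧ a.1 ≠ b.1 ∧ q a.1 = q b.1

/-- In the pasting construction, if every edge of `X` lies in strictly fewer
than `m_X - M_Y - 1` triangles (`m_X` the minimal degree of `X`, `M_Y` the
maximal degree of `Y`), then every isometry `f` of the pasted graph `X̃`
sends vertical edges to vertical edges and induces an isometry `g` of `X`
intertwined with `f` by the projection `X̃ → X`. -/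
theorem pastedGraph_isometry_descends
    (Y : SimpleGraph VY) (Yt : SimpleGraph VYt) (X : SimpleGraph (I × VY))
    (q : VYt → VY) (hYconn : Y.Connected)
    (hcov : IsGraphCovering Yt Y q)
    (h2to1 : ∀ y : VY, {z : VYt | q z = y}.ncard = 2)
    (hinduce : ∀ (i : I) (y y' : VY), X.Adj (i, y) (i, y') ↔ Y.Adj y y')
    (mX MY : ℕ)
    (hMY : ∀ y : VY, (Y.neighborSet y).ncard ≤ MY)
    (hmX : ∀ v : I × VY, mX ≤ (X.neighborSet v).ncard)
    (htri : ∀ a b : I × VY, X.Adj a b →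
      {c : I × VY | X.Adj a c ∧ X.Adj b c}.ncard + MY + 1 < mX) :
    ∀ f : pastedGraph Yt X q ≃g pastedGraph Yt X q,
      (∀ a b : VYt × I, VerticalAdj q a b → VerticalAdj q (f a) (f b)) ∧
      ∃ g : X ≃g X, ∀ a : VYt × I,
        g (a.2, q a.1) = ((f a).2, q (f a).1) := by
  classical
  set G := pastedGraph Yt X q with hGdef
  -- fiber structure
  have hfib : ∀ y : VY, ∃ s t : VYt, q s = y ∧ q t = y ∧ s ≠ t ∧
      ∀ z, q z = y → z = s ∨ z = t := by
    intro y
    obtain ⟨s, t, hst, hset⟩ := Set.ncard_eq_two.mp (h2to1 y)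
    have hs : q s = y := by
      have : s ∈ {z : VYt | q z = y} := hset ▸ (by simp)
      exact this
    have ht : q t = y := by
      have : t ∈ {z : VYt | q z = y} := hset ▸ (by simp)
      exact this
    refine ⟨s, t, hs, ht, hst, fun z hz => ?_⟩
    have : z ∈ ({s, t} : Set VYt) := hset ▸ hz
    simpa using this
  choose σ τ hqσ hqτ hστ hfc using hfib
  -- basic adjacency facts
  have hvadj : ∀ u v : VYt × I, VerticalAdj q u v → G.Adj u v := by
    rintro u v ⟨h1, h2, h3⟩
    exact Or.inl ⟨h1, Or.inr ⟨h2, h3⟩⟩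
  have hproj : ∀ u v : VYt × I, G.Adj u v → ¬ VerticalAdj q u v →
      X.Adj (u.2, q u.1) (v.2, q v.1) := by
    rintro u v (⟨h1, h2 | h3⟩ | ⟨h1, h2⟩) hnv
    · rw [← h1]
      exact (hinduce u.2 _ _).mpr (hcov.1 _ _ h2)
    · exact absurd ⟨h1, h3.1, h3.2⟩ hnv
    · exact h2
  -- main claim: every isometry sends vertical edges to vertical edges
  have claim1 : ∀ e : G ≃g G, ∀ a b : VYt × I,
      VerticalAdj q a b → VerticalAdj q (e a) (e b) := by
    by_cases hX : ∃ w w' : I × VY, X.Adj w w'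
    case neg =>
      have hallv : ∀ u v : VYt × I, G.Adj u v → VerticalAdj q u v := by
        rintro u v (⟨h1, h2 | h3⟩ | ⟨h1, h2⟩)
        · exact absurd ⟨_, _, (hinduce u.2 _ _).mpr (hcov.1 _ _ h2)⟩ hX
        · exact ⟨h1, h3⟩
        · exact absurd ⟨_, _, h2⟩ hX
      intro e a b hab
      exact hallv _ _ (e.map_adj_iff.mpr (hvadj _ _ hab))
    case pos =>
      obtain ⟨w0, w0', hw0⟩ := hX
      have hm2 : MY + 2 ≤ mX := by have := htri _ _ hw0; omega
      have hXfin : ∀ v : I × VY, (X.neighborSet v).Finite := by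
        intro v
        by_contra h
        have h0 := Set.Infinite.ncard h
        have h1 := hmX v
        omega
      have hYfin : ∀ (i : I) (y : VY), (Y.neighborSet y).Finite := by
        intro i y
        have him : ((fun z => ((i, z) : I × VY)) '' Y.neighborSet y).Finite := by
          refine (hXfin (i, y)).subset ?_
          rintro _ ⟨z, hz, rfl⟩
          exact (hinduce i y z).mpr hz
        exact Set.Finite.of_finite_image him
          (fun a _ b _ hab => by simpa using congrArg Prod.snd hab)
      have hGnbrfin : ∀ u : VYt × I, (G.neighborSet u).Finite := by
        rintro ⟨a, i⟩
        have hE1 : ((fun z : VYt => (z, i)) '' Yt.neighborSet a).Finite := by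
          refine Set.Finite.image _ ?_
          refine Set.Finite.of_finite_image ?_ (hcov.2 a).injOn
          rw [(hcov.2 a).image_eq]
          exact hYfin i (q a)
        have hE2 : ({(σ (q a), i), (τ (q a), i)} : Set (VYt × I)).Finite := by
          exact (Set.finite_singleton _).insert _
        have hE3 : (⋃ w ∈ X.neighborSet (i, q a),
            ({(σ w.2, w.1), (τ w.2, w.1)} : Set (VYt × I))).Finite :=
          (hXfin (i, q a)).biUnion (fun w _ => (Set.finite_singleton _).insert _)
        refine ((hE1.union hE2).union hE3).subset ?_
        rintro c (⟨h1, h2 | ⟨h2, h3⟩⟩ | ⟨h1, h2⟩)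
        · exact Or.inl (Or.inl ⟨c.1, h2, Prod.ext_iff.mpr ⟨rfl, h1⟩⟩)
        · refine Or.inl (Or.inr ?_)
          rcases hfc (q a) c.1 h3.symm with h | h
          · exact Or.inl (Prod.ext_iff.mpr ⟨h, h1.symm⟩)
          · exact Or.inr (Prod.ext_iff.mpr ⟨h, h1.symm⟩)
        · refine Or.inr (Set.mem_biUnion (show (c.2, q c.1) ∈ X.neighborSet (i, q a) from h2) ?_)
          rcases hfc (q c.1) c.1 rfl with h | h
          · exact Or.inl (Prod.ext_iff.mpr ⟨h, rfl⟩)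
          · exact Or.inr (Prod.ext_iff.mpr ⟨h, rfl⟩)
      have claimA : ∀ (s t : VYt) (i : I), s ≠ t → q s = q t →
          2 * (mX - MY) ≤ {c : VYt × I | G.Adj (s, i) c ∧ G.Adj (t, i) c}.ncard := by
        intro s t i hst hq
        set S : Set (I × VY) := {w | X.Adj (i, q s) w ∧ w.1 ≠ i} with hS
        have hSfin : S.Finite := (hXfin (i, q s)).subset (fun w hw => hw.1)
        have hSbig : mX ≤ S.ncard + MY := by
          have hTle : {w : I × VY | X.Adj (i, q s) w ∧ w.1 = i}.ncard ≤ MY := by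
            have hinj : Set.InjOn (fun w : I × VY => w.2)
                {w : I × VY | X.Adj (i, q s) w ∧ w.1 = i} := by
              intro w1 h1 w2 h2 h
              exact Prod.ext (h1.2.trans h2.2.symm) h
            have himle : ((fun w : I × VY => w.2) ''
                {w : I × VY | X.Adj (i, q s) w ∧ w.1 = i}).ncard
                ≤ (Y.neighborSet (q s)).ncard := by
              refine Set.ncard_le_ncard ?_ (hYfin i (q s))
              rintro _ ⟨w, ⟨hw1, hw2⟩, rfl⟩
              have hw : (i, w.2) = w := Prod.ext hw2.symm rfl
              rw [← hw] at hw1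
              exact (hinduce i (q s) w.2).mp hw1
            rw [Set.ncard_image_of_injOn hinj] at himle
            exact le_trans himle (hMY (q s))
          have hun : mX ≤ (S ∪ {w : I × VY | X.Adj (i, q s) w ∧ w.1 = i}).ncard := by
            refine le_trans (hmX (i, q s)) (Set.ncard_le_ncard ?_ ?_)
            · intro w hw
              by_cases hwi : w.1 = i
              · exact Or.inr ⟨hw, hwi⟩
              · exact Or.inl ⟨hw, hwi⟩
            · exact hSfin.union ((hXfin _).subset fun w hw => hw.1)
          have := Set.ncard_union_le S {w : I × VY | X.Adj (i, q s) w ∧ w.1 = i}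
          omega
        have hAinj : Set.InjOn (fun w : I × VY => ((σ w.2 : VYt), w.1)) S := by
          intro w1 _ w2 _ h
          have h1 : σ w1.2 = σ w2.2 := congrArg Prod.fst h
          have h2 := congrArg q h1
          rw [hqσ, hqσ] at h2
          exact Prod.ext (congrArg Prod.snd h) h2
        have hBinj : Set.InjOn (fun w : I × VY => ((τ w.2 : VYt), w.1)) S := by
          intro w1 _ w2 _ h
          have h1 : τ w1.2 = τ w2.2 := congrArg Prod.fst h
          have h2 := congrArg q h1
          rw [hqτ, hqτ] at h2
          exact Prod.ext (congrArg Prod.snd h) h2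
        have hABdisj : Disjoint ((fun w : I × VY => ((σ w.2 : VYt), w.1)) '' S)
            ((fun w : I × VY => ((τ w.2 : VYt), w.1)) '' S) := by
          rw [Set.disjoint_left]
          rintro _ ⟨w, -, rfl⟩ ⟨w', -, h⟩
          have h1 : τ w'.2 = σ w.2 := congrArg Prod.fst h
          have h2 := congrArg q h1
          rw [hqσ, hqτ] at h2
          rw [h2] at h1
          exact hστ w.2 h1.symm
        have hadj : ∀ w ∈ S, ∀ z : VYt, q z = w.2 →
            G.Adj (s, i) (z, w.1) ∧ G.Adj (t, i) (z, w.1) := by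
          intro w hw z hz
          have hx : X.Adj (i, q s) (w.1, q z) := by
            rw [hz]
            have hw' : (w.1, w.2) = w := Prod.ext rfl rfl
            rw [hw']
            exact hw.1
          exact ⟨Or.inr ⟨Ne.symm hw.2, hx⟩, Or.inr ⟨Ne.symm hw.2, by
            show X.Adj (i, q t) _
            rw [← hq]; exact hx⟩⟩
        have hsub : ((fun w : I × VY => ((σ w.2 : VYt), w.1)) '' S)
            ∪ ((fun w : I × VY => ((τ w.2 : VYt), w.1)) '' S)
            ⊆ {c : VYt × I | G.Adj (s, i) c ∧ G.Adj (t, i) c} := by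
          rintro _ (⟨w, hw, rfl⟩ | ⟨w, hw, rfl⟩)
          · exact hadj w hw _ (hqσ w.2)
          · exact hadj w hw _ (hqτ w.2)
        have hCfin : {c : VYt × I | G.Adj (s, i) c ∧ G.Adj (t, i) c}.Finite :=
          (hGnbrfin (s, i)).subset (fun c hc => hc.1)
        have hcard : ((fun w : I × VY => ((σ w.2 : VYt), w.1)) '' S
            ∪ (fun w : I × VY => ((τ w.2 : VYt), w.1)) '' S).ncard = S.ncard + S.ncard := by
          rw [Set.ncard_union_eq hABdisj (hSfin.image _) (hSfin.image _),
            Set.ncard_image_of_injOn hAinj, Set.ncard_image_of_injOn hBinj]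
        have hfinal := Set.ncard_le_ncard hsub hCfin
        rw [hcard] at hfinal
        omega
      have claimB : ∀ u v : VYt × I, G.Adj u v → ¬ VerticalAdj q u v →
          {c : VYt × I | G.Adj u c ∧ G.Adj v c}.ncard < 2 * (mX - MY) := by
        intro u v huv hnv
        have hXadj : X.Adj (u.2, q u.1) (v.2, q v.1) := hproj u v huv hnv
        set T : Set (I × VY) := {c | X.Adj (u.2, q u.1) c ∧ X.Adj (v.2, q v.1) c} with hT
        have hTfin : T.Finite := (hXfin _).subset (fun c hc => hc.1)
        have htr := htri _ _ hXadj
        rw [← hT] at htr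
        have hpart : ∀ x : VYt × I, ∃ pc : VYt × I,
            ∀ c : VYt × I, VerticalAdj q x c → c = pc := by
          intro x
          rcases hfc (q x.1) x.1 rfl with h | h
          · refine ⟨(τ (q x.1), x.2), ?_⟩
            rintro c ⟨h1, h2, h3⟩
            rcases hfc (q x.1) c.1 h3.symm with h' | h'
            · exact absurd (h'.trans h.symm).symm h2
            · exact Prod.ext h' h1.symm
          · refine ⟨(σ (q x.1), x.2), ?_⟩
            rintro c ⟨h1, h2, h3⟩
            rcases hfc (q x.1) c.1 h3.symm with h' | h'
            · exact Prod.ext h' h1.symm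
            · exact absurd (h'.trans h.symm).symm h2
        obtain ⟨pu, hpu⟩ := hpart u
        obtain ⟨pv, hpv⟩ := hpart v
        have hsub : {c : VYt × I | G.Adj u c ∧ G.Adj v c}
            ⊆ ((((fun w : I × VY => ((σ w.2 : VYt), w.1)) '' T)
              ∪ ((fun w : I × VY => ((τ w.2 : VYt), w.1)) '' T)) ∪ {pu}) ∪ {pv} := by
          rintro c ⟨hcu, hcv⟩
          by_cases h1 : VerticalAdj q u c
          · exact Or.inl (Or.inr (hpu c h1))
          by_cases h2 : VerticalAdj q v c
          · exact Or.inr (hpv c h2)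
          have hx1 : X.Adj (u.2, q u.1) (c.2, q c.1) := hproj u c hcu h1
          have hx2 : X.Adj (v.2, q v.1) (c.2, q c.1) := hproj v c hcv h2
          have hmem : (c.2, q c.1) ∈ T := ⟨hx1, hx2⟩
          rcases hfc (q c.1) c.1 rfl with h | h
          · exact Or.inl (Or.inl (Or.inl ⟨(c.2, q c.1), hmem, Prod.ext_iff.mpr ⟨h.symm, rfl⟩⟩))
          · exact Or.inl (Or.inl (Or.inr ⟨(c.2, q c.1), hmem, Prod.ext_iff.mpr ⟨h.symm, rfl⟩⟩))
        have hfinU : (((((fun w : I × VY => ((σ w.2 : VYt), w.1)) '' T)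
            ∪ ((fun w : I × VY => ((τ w.2 : VYt), w.1)) '' T)) ∪ {pu}) ∪ {pv}).Finite :=
          (((hTfin.image _).union (hTfin.image _)).union
            (Set.finite_singleton _)).union (Set.finite_singleton _)
        have e0 := Set.ncard_le_ncard hsub hfinU
        have e1 := Set.ncard_union_le ((((fun w : I × VY => ((σ w.2 : VYt), w.1)) '' T)
            ∪ ((fun w : I × VY => ((τ w.2 : VYt), w.1)) '' T)) ∪ {pu}) ({pv} : Set (VYt × I))
        have e2 := Set.ncard_union_le (((fun w : I × VY => ((σ w.2 : VYt), w.1)) '' T)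
            ∪ ((fun w : I × VY => ((τ w.2 : VYt), w.1)) '' T)) ({pu} : Set (VYt × I))
        have e3 := Set.ncard_union_le ((fun w : I × VY => ((σ w.2 : VYt), w.1)) '' T)
            ((fun w : I × VY => ((τ w.2 : VYt), w.1)) '' T)
        have e4 : ((fun w : I × VY => ((σ w.2 : VYt), w.1)) '' T).ncard ≤ T.ncard :=
          Set.ncard_image_le hTfin
        have e5 : ((fun w : I × VY => ((τ w.2 : VYt), w.1)) '' T).ncard ≤ T.ncard :=
          Set.ncard_image_le hTfin
        have e7 : ({pu} : Set (VYt × I)).ncard = 1 := Set.ncard_singleton _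
        have e8 : ({pv} : Set (VYt × I)).ncard = 1 := Set.ncard_singleton _
        omega
      intro e a b hab
      have hadj : G.Adj (e a) (e b) := e.map_adj_iff.mpr (hvadj _ _ hab)
      by_contra hnv
      have hlt := claimB (e a) (e b) hadj hnv
      have himg : {c : VYt × I | G.Adj (e a) c ∧ G.Adj (e b) c}
          = (⇑e) '' {c : VYt × I | G.Adj a c ∧ G.Adj b c} := by
        ext c
        constructor
        · rintro ⟨h1, h2⟩
          exact ⟨e.symm c, ⟨by rwa [← e.apply_symm_apply c, e.map_adj_iff] at h1,
            by rwa [← e.apply_symm_apply c, e.map_adj_iff] at h2⟩, e.apply_symm_apply c⟩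
        · rintro ⟨d, ⟨h1, h2⟩, rfl⟩
          exact ⟨e.map_adj_iff.mpr h1, e.map_adj_iff.mpr h2⟩
      have hge : 2 * (mX - MY) ≤ {c : VYt × I | G.Adj (e a) c ∧ G.Adj (e b) c}.ncard := by
        rw [himg, Set.ncard_image_of_injective _ e.injective]
        obtain ⟨a1, i⟩ := a
        obtain ⟨b1, j⟩ := b
        obtain ⟨h1, h2, h3⟩ := hab
        obtain rfl : i = j := h1
        exact claimA a1 b1 i h2 h3
      omega
  intro f
  refine ⟨claim1 f, ?_⟩
  -- descent of the projection
  have hdesc : ∀ (e : G ≃g G) (u v : VYt × I), (u.2, q u.1) = (v.2, q v.1) →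
      ((e u).2, q (e u).1) = ((e v).2, q (e v).1) := by
    intro e u v h
    rw [Prod.mk.injEq] at h
    by_cases huv : u.1 = v.1
    · rw [Prod.ext huv h.1]
    · obtain ⟨h1, h2, h3⟩ := claim1 e u v ⟨h.1, huv, h.2⟩
      rw [Prod.mk.injEq]; exact ⟨h1, h3⟩
  have hinv : ∀ (e e' : G ≃g G), (∀ x, e' (e x) = x) → ∀ w : I × VY,
      ((e' (σ ((e (σ w.2, w.1)).2, q (e (σ w.2, w.1)).1).2,
            ((e (σ w.2, w.1)).2, q (e (σ w.2, w.1)).1).1)).2,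
        q (e' (σ ((e (σ w.2, w.1)).2, q (e (σ w.2, w.1)).1).2,
            ((e (σ w.2, w.1)).2, q (e (σ w.2, w.1)).1).1)).1) = w := by
    intro e e' h w
    have key := hdesc e' (σ (q (e (σ w.2, w.1)).1), (e (σ w.2, w.1)).2)
      (e (σ w.2, w.1)) (by simp [hqσ])
    simpa [key, h] using (by simp [hqσ] : ((w.1 : I), q (σ w.2)) = w)
  have hproj' : ∀ (e : G ≃g G) (u v : VYt × I), G.Adj u v → ¬ VerticalAdj q u v →
      X.Adj ((e u).2, q (e u).1) ((e v).2, q (e v).1) := by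
    intro e u v huv hnv
    refine hproj _ _ (e.map_adj_iff.mpr huv) ?_
    intro hver
    have := claim1 e.symm _ _ hver
    simp only [RelIso.symm_apply_apply] at this
    exact hnv this
  have hfor : ∀ (e : G ≃g G) (u v : I × VY), X.Adj u v →
      X.Adj ((e (σ u.2, u.1)).2, q (e (σ u.2, u.1)).1)
            ((e (σ v.2, v.1)).2, q (e (σ v.2, v.1)).1) := by
    intro e u v huv
    obtain ⟨i, y⟩ := u
    obtain ⟨j, z⟩ := v
    dsimp only at huv ⊢
    by_cases hij : i = j
    · subst hij
      have hyz : Y.Adj y z := (hinduce i y z).mp huv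
      have hz : z ∈ Y.neighborSet (q (σ y)) := by rw [hqσ]; exact hyz
      obtain ⟨c, hc, hqc⟩ := (hcov.2 (σ y)).surjOn hz
      have hedge : G.Adj (σ y, i) (c, i) := Or.inl ⟨rfl, Or.inl hc⟩
      have hnvv : ¬ VerticalAdj q (σ y, i) (c, i) := by
        rintro ⟨-, -, h3⟩
        dsimp only at h3
        rw [hqσ, hqc] at h3
        exact Y.loopless.irrefl z (h3 ▸ hyz)
      have hXa := hproj' e _ _ hedge hnvv
      have hpe : ((e (c, i)).2, q (e (c, i)).1) = ((e (σ z, i)).2, q (e (σ z, i)).1) :=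
        hdesc e (c, i) (σ z, i) (by simp [hqσ, hqc])
      rw [hpe] at hXa
      exact hXa
    · have hedge : G.Adj (σ y, i) (σ z, j) :=
        Or.inr ⟨hij, by dsimp only; rw [hqσ, hqσ]; exact huv⟩
      exact hproj' e _ _ hedge (fun h => hij h.1)
  refine ⟨⟨⟨fun w => ((f (σ w.2, w.1)).2, q (f (σ w.2, w.1)).1),
          fun w => ((f.symm (σ w.2, w.1)).2, q (f.symm (σ w.2, w.1)).1),
          hinv f f.symm (fun x => f.symm_apply_apply x),
          hinv f.symm f (fun x => f.apply_symm_apply x)⟩, ?_⟩, ?_⟩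
  · intro u v
    constructor
    · intro h
      simp only [Equiv.coe_fn_mk] at h
      have := hfor f.symm _ _ h
      rwa [hinv f f.symm (fun x => f.symm_apply_apply x) u,
           hinv f f.symm (fun x => f.symm_apply_apply x) v] at this
    · intro h
      simpa only [Equiv.coe_fn_mk] using hfor f u v h
  · intro a
    have key := hdesc f (σ (q a.1), a.2) a (by simp [hqσ])
    simpa using key
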